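/- Comparison for smooth solutions: let v¹, v² be bounded C¹ solutions of -∂_t v + v + β(t)xy ∂_x v - x(∂_x v)_- + (γ(t) - β(t)x) y ∂_y v = 0 in Ω × (0,∞), Ω = (0,∞) × (μ₀,∞), with v¹ = v² on the boundary portions {y = μ₀, 0 ≤ x ≤ γ₂/β₁}, {x = 0}, and {t = 0, 0 ≤ x ≤ γ₂/β₁}. Then v¹ = v² on all of the closure of Ω × (0,∞). -/

import Mathlib

open Set Filter

private lemma deriv_nonpos_of_right_max {f : ℝ → ℝ} {d η : ℝ} (hη : 0 < η)
    (hf : HasDerivAt f d 0) (h : ∀ s ∈ Set.Ioo (0:ℝ) η, f s ≤ f 0) : d ≤ 0 := by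
  by_contra hd
  push_neg at hd
  have h1 : Tendsto (slope f 0) (nhdsWithin 0 {(0:ℝ)}ᶜ) (nhds d) :=
    hasDerivAt_iff_tendsto_slope.mp hf
  have h2 : Tendsto (slope f 0) (nhdsWithin 0 (Set.Ioi 0)) (nhds d) :=
    h1.mono_left (nhdsWithin_mono _ (fun x hx => ne_of_gt hx))
  have h3 : ∀ᶠ s in nhdsWithin 0 (Set.Ioi (0:ℝ)), 0 < slope f 0 s :=
    h2.eventually (eventually_gt_nhds hd)
  have h4 : ∀ᶠ s in nhdsWithin 0 (Set.Ioi (0:ℝ)), s ∈ Set.Ioo (0:ℝ) η := by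
    refine eventually_nhdsWithin_iff.mpr ?_
    filter_upwards [eventually_abs_sub_lt 0 hη] with s hs hs'
    exact ⟨hs', by simpa [abs_of_pos (show (0:ℝ) < s from hs')] using hs⟩
  obtain ⟨s, hs3, hs4⟩ := (h3.and h4).exists
  have hq : 0 < (f s - f 0) / s := by simpa [slope_def_field] using hs3
  have hfs := h s hs4
  have hs0 : 0 < s := hs4.1
  have h5 : 0 < (f s - f 0) / s * s := mul_pos hq hs0
  rw [div_mul_cancel₀ _ (ne_of_gt hs0)] at h5
  linarith

private lemma hasDerivAt_line (v : ℝ × ℝ × ℝ → ℝ) (hv : ContDiff ℝ 1 v) (p d : ℝ × ℝ × ℝ) :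
    HasDerivAt (fun s : ℝ => v (p + s • d)) (fderiv ℝ v p d) 0 := by
  have hline : HasDerivAt (fun s : ℝ => p + s • d) d 0 := by
    simpa using ((hasDerivAt_id (0:ℝ)).smul_const d).const_add p
  have hd' : HasFDerivAt v (fderiv ℝ v p) (p + (0:ℝ) • d) := by
    simpa using (hv.differentiable one_ne_zero p).hasFDerivAt
  have := hd'.comp_hasDerivAt (0:ℝ) hline
  exact this

private noncomputable def sirOp (β γ : ℝ → ℝ) (v : ℝ × ℝ × ℝ → ℝ) (p : ℝ × ℝ × ℝ) : ℝ :=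
  -(fderiv ℝ v p (0, 0, 1)) + v p +
      β p.2.2 * p.1 * p.2.1 * fderiv ℝ v p (1, 0, 0) -
      p.1 * max (-(fderiv ℝ v p (1, 0, 0))) 0 +
      (γ p.2.2 - β p.2.2 * p.1) * p.2.1 * fderiv ℝ v p (0, 1, 0)

private lemma sirOp_continuous (β γ : ℝ → ℝ) (hβc : Continuous β) (hγc : Continuous γ)
    (v : ℝ × ℝ × ℝ → ℝ) (hv : ContDiff ℝ 1 v) : Continuous (sirOp β γ v) := by
  have hf : Continuous (fderiv ℝ v) := hv.continuous_fderiv one_ne_zero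
  have h1 : Continuous fun p : ℝ × ℝ × ℝ => fderiv ℝ v p (0, 0, 1) :=
    hf.clm_apply continuous_const
  have h2 : Continuous fun p : ℝ × ℝ × ℝ => fderiv ℝ v p (1, 0, 0) :=
    hf.clm_apply continuous_const
  have h3 : Continuous fun p : ℝ × ℝ × ℝ => fderiv ℝ v p (0, 1, 0) :=
    hf.clm_apply continuous_const
  have hx : Continuous fun p : ℝ × ℝ × ℝ => p.1 := continuous_fst
  have hy : Continuous fun p : ℝ × ℝ × ℝ => p.2.1 := continuous_snd.fst
  have ht : Continuous fun p : ℝ × ℝ × ℝ => p.2.2 := continuous_snd.snd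
  unfold sirOp
  exact (((h1.neg.add (hv.continuous)).add
    ((((hβc.comp ht).mul hx).mul hy).mul h2)).sub
      (hx.mul (h2.neg.max continuous_const))).add
        ((((hγc.comp ht).sub ((hβc.comp ht).mul hx)).mul hy).mul h3)

private lemma sirOp_closure (β γ : ℝ → ℝ) (hβc : Continuous β) (hγc : Continuous γ)
    (μ₀ : ℝ) (v : ℝ × ℝ × ℝ → ℝ) (hv : ContDiff ℝ 1 v)
    (h : ∀ p ∈ Set.Ioi (0:ℝ) ×ˢ Set.Ioi μ₀ ×ˢ Set.Ioi (0:ℝ), sirOp β γ v p = 0) :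
    ∀ p ∈ Set.Ici (0:ℝ) ×ˢ Set.Ici μ₀ ×ˢ Set.Ici (0:ℝ), sirOp β γ v p = 0 := by
  have hcl : closure (Set.Ioi (0:ℝ) ×ˢ Set.Ioi μ₀ ×ˢ Set.Ioi (0:ℝ))
      = Set.Ici (0:ℝ) ×ˢ Set.Ici μ₀ ×ˢ Set.Ici (0:ℝ) := by
    simp [closure_prod_eq, closure_Ioi]
  intro p hp
  rw [← hcl] at hp
  exact Set.EqOn.closure (fun q hq => h q hq)
    (sirOp_continuous β γ hβc hγc v hv) continuous_const hp

private noncomputable def wlin (m : ℝ) (q : ℝ × ℝ × ℝ) : ℝ := m / 2 * q.2.2 + q.1 + q.2.1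

private lemma wlin_continuous (m : ℝ) : Continuous (wlin m) := by
  unfold wlin; fun_prop

set_option maxHeartbeats 1000000 in
private lemma sir_comp_le
    (β γ : ℝ → ℝ) (β₁ β₂ γ₁ γ₂ μ₀ : ℝ)
    (hβ₁ : 0 < β₁) (hγ₁ : 0 < γ₁)
    (hβ : ∀ t ≥ (0:ℝ), β t ∈ Set.Icc β₁ β₂)
    (hγ : ∀ t ≥ (0:ℝ), γ t ∈ Set.Icc γ₁ γ₂) (hμ₀ : 0 < μ₀)
    (v₁ v₂ : ℝ × ℝ × ℝ → ℝ)
    (hv₁ : ContDiff ℝ 1 v₁) (hv₂ : ContDiff ℝ 1 v₂)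
    (hv₁b : ∃ M : ℝ, ∀ p, |v₁ p| ≤ M) (hv₂b : ∃ M : ℝ, ∀ p, |v₂ p| ≤ M)
    (hE₁ : ∀ p ∈ Set.Ici (0:ℝ) ×ˢ Set.Ici μ₀ ×ˢ Set.Ici (0:ℝ), sirOp β γ v₁ p = 0)
    (hE₂ : ∀ p ∈ Set.Ici (0:ℝ) ×ˢ Set.Ici μ₀ ×ˢ Set.Ici (0:ℝ), sirOp β γ v₂ p = 0)
    (hbd₁ : ∀ x ∈ Set.Icc (0:ℝ) (γ₂ / β₁), ∀ t ≥ (0:ℝ), v₁ (x, μ₀, t) = v₂ (x, μ₀, t))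
    (hbd₂ : ∀ y ≥ μ₀, ∀ t ≥ (0:ℝ), v₁ (0, y, t) = v₂ (0, y, t))
    (hbd₃ : ∀ x ∈ Set.Icc (0:ℝ) (γ₂ / β₁), ∀ y ≥ μ₀, v₁ (x, y, 0) = v₂ (x, y, 0)) :
    ∀ p ∈ Set.Ici (0:ℝ) ×ˢ Set.Ici μ₀ ×ˢ Set.Ici (0:ℝ), v₁ p ≤ v₂ p := by
  obtain ⟨M₁, hM₁⟩ := hv₁b
  obtain ⟨M₂, hM₂⟩ := hv₂b
  set M : ℝ := |M₁| + |M₂| + 1 with hMdef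
  have hM0 : 0 < M := by positivity
  have hub : ∀ q, v₁ q - v₂ q ≤ 2 * M := by
    intro q
    have h1 := abs_le.mp (le_trans (hM₁ q) (le_abs_self M₁))
    have h2 := abs_le.mp (le_trans (hM₂ q) (le_abs_self M₂))
    have := abs_nonneg M₁; have := abs_nonneg M₂
    linarith [h1.2, h2.1]
  have hwl : ∀ q : ℝ × ℝ × ℝ, wlin μ₀ q = μ₀ / 2 * q.2.2 + q.1 + q.2.1 := fun _ => rfl
  have hwlc : Continuous (wlin μ₀) := wlin_continuous μ₀
  -- main claim
  suffices hkey : ∀ ε > (0:ℝ), ∀ p ∈ Set.Ici (0:ℝ) ×ˢ Set.Ici μ₀ ×ˢ Set.Ici (0:ℝ),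
      v₁ p - v₂ p ≤ ε * wlin μ₀ p by
    intro p hp
    by_contra hlt
    push_neg at hlt
    simp only [Set.mem_prod, Set.mem_Ici] at hp
    have hwlp : 0 < wlin μ₀ p := by
      have h1 := hp.1; have h2 := hp.2.1; have h3 := hp.2.2
      rw [hwl]; nlinarith
    set u : ℝ := v₁ p - v₂ p with hu
    have hu0 : 0 < u := by simp [hu]; linarith
    have heps := hkey (u / (2 * wlin μ₀ p)) (by positivity) p
      (by simp only [Set.mem_prod, Set.mem_Ici]; exact hp)
    have hval : u / (2 * wlin μ₀ p) * wlin μ₀ p = u / 2 := by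
      field_simp
    rw [← hu, hval] at heps
    linarith
  intro ε hε
  by_contra hcon
  push_neg at hcon
  obtain ⟨p₀, hp₀S, hp₀⟩ := hcon
  set F : ℝ × ℝ × ℝ → ℝ := fun q => v₁ q - v₂ q - ε * wlin μ₀ q with hF
  have hFc : Continuous F := by
    rw [hF]; exact (hv₁.continuous.sub hv₂.continuous).sub (continuous_const.mul hwlc)
  have hc : 0 < F p₀ := by simp only [hF]; linarith
  simp only [Set.mem_prod, Set.mem_Ici] at hp₀S
  set B : ℝ := (2 * M + 1) * (2 / μ₀ + 1) / ε with hBdef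
  set R : ℝ := max (max (max p₀.1 p₀.2.1) (max p₀.2.2 μ₀)) B + 1 with hRdef
  have hRx : p₀.1 < R := by
    have := le_max_left (max p₀.1 p₀.2.1) (max p₀.2.2 μ₀)
    have := le_max_left p₀.1 p₀.2.1
    have := le_max_left (max (max p₀.1 p₀.2.1) (max p₀.2.2 μ₀)) B
    simp only [hRdef]; linarith
  have hRy : p₀.2.1 < R := by
    have := le_max_left (max p₀.1 p₀.2.1) (max p₀.2.2 μ₀)
    have := le_max_right p₀.1 p₀.2.1
    have := le_max_left (max (max p₀.1 p₀.2.1) (max p₀.2.2 μ₀)) B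
    simp only [hRdef]; linarith
  have hRt : p₀.2.2 < R := by
    have := le_max_right (max p₀.1 p₀.2.1) (max p₀.2.2 μ₀)
    have := le_max_left p₀.2.2 μ₀
    have := le_max_left (max (max p₀.1 p₀.2.1) (max p₀.2.2 μ₀)) B
    simp only [hRdef]; linarith
  have hRμ : μ₀ < R := by
    have := le_max_right (max p₀.1 p₀.2.1) (max p₀.2.2 μ₀)
    have := le_max_right p₀.2.2 μ₀
    have := le_max_left (max (max p₀.1 p₀.2.1) (max p₀.2.2 μ₀)) B
    simp only [hRdef]; linarith
  have hBR : B + 1 ≤ R := by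
    have := le_max_right (max (max p₀.1 p₀.2.1) (max p₀.2.2 μ₀)) B
    simp only [hRdef]; linarith
  have hεB : ε * B = (2 * M + 1) * (2 / μ₀ + 1) := by
    simp only [hBdef]; field_simp
  have hμinv : 0 < 2 / μ₀ := by positivity
  have h1R : ε * (B + 1) ≤ ε * R := mul_le_mul_of_nonneg_left hBR hε.le
  have h2R : ε * (B + 1) = (2 * M + 1) * (2 / μ₀ + 1) + ε := by
    rw [mul_add, hεB]; ring
  have h5R : 0 ≤ (2 * M + 1) * (2 / μ₀) :=
    mul_nonneg (by linarith) hμinv.le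
  have h8R : (2 * M + 1) * (2 / μ₀ + 1) = (2 * M + 1) * (2 / μ₀) + (2 * M + 1) := by ring
  have hεR : 2 * M < ε * R := by linarith
  have hμ2 : (2 * M + 1) * (μ₀ / 2 * (2 / μ₀)) = 2 * M + 1 := by
    have : μ₀ / 2 * (2 / μ₀) = 1 := by field_simp
    rw [this, mul_one]
  have hεRμ : 2 * M < ε * (μ₀ / 2) * R := by
    have h3R : μ₀ / 2 * (ε * (B + 1)) ≤ μ₀ / 2 * (ε * R) :=
      mul_le_mul_of_nonneg_left h1R (by positivity)
    have h6R : 0 ≤ (2 * M + 1) * (μ₀ / 2) := mul_nonneg (by linarith) (by positivity)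
    have h7R : 0 ≤ ε * (μ₀ / 2) := by positivity
    have h9R : μ₀ / 2 * (ε * (B + 1))
        = (2 * M + 1) * (μ₀ / 2 * (2 / μ₀)) + (2 * M + 1) * (μ₀ / 2) + ε * (μ₀ / 2) := by
      rw [h2R]; ring
    linarith
  -- far-away values of F are below F p₀
  have hFsmall : ∀ q : ℝ × ℝ × ℝ, 0 ≤ q.1 → μ₀ ≤ q.2.1 → 0 ≤ q.2.2 →
      (R ≤ q.1 ∨ R ≤ q.2.1 ∨ R ≤ q.2.2) → F q < F p₀ := by
    intro q h1 h2 h3 hcase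
    have hubq := hub q
    have hwlq1 : q.1 ≤ wlin μ₀ q := by rw [hwl]; nlinarith
    have hwlq2 : q.2.1 ≤ wlin μ₀ q := by rw [hwl]; nlinarith
    have hwlq3 : μ₀ / 2 * q.2.2 ≤ wlin μ₀ q := by rw [hwl]; nlinarith
    have hwlbig : 2 * M < ε * wlin μ₀ q := by
      rcases hcase with h | h | h
      · linarith [mul_le_mul_of_nonneg_left (le_trans h hwlq1) hε.le, hεR]
      · linarith [mul_le_mul_of_nonneg_left (le_trans h hwlq2) hε.le, hεR]
      · linarith [mul_le_mul_of_nonneg_left h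
            (show (0:ℝ) ≤ ε * (μ₀ / 2) by positivity),
          mul_le_mul_of_nonneg_left hwlq3 hε.le, hεRμ]
    simp only [hF]
    simp only [hF] at hc
    linarith
  set K : Set (ℝ × ℝ × ℝ) := Set.Icc (0:ℝ) R ×ˢ Set.Icc μ₀ R ×ˢ Set.Icc (0:ℝ) R with hK
  have hKc : IsCompact K := (isCompact_Icc.prod (isCompact_Icc.prod isCompact_Icc))
  have hp₀K : p₀ ∈ K := by
    simp only [hK, Set.mem_prod, Set.mem_Icc]
    exact ⟨⟨hp₀S.1, hRx.le⟩, ⟨hp₀S.2.1, hRy.le⟩, ⟨hp₀S.2.2, hRt.le⟩⟩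
  obtain ⟨q, hqK, hqmax'⟩ := hKc.exists_isMaxOn ⟨p₀, hp₀K⟩ hFc.continuousOn
  have hqmax : ∀ r ∈ K, F r ≤ F q := hqmax'
  obtain ⟨x, y, t⟩ := q
  simp only [hK, Set.mem_prod, Set.mem_Icc] at hqK
  obtain ⟨⟨hx0, hxR⟩, ⟨hyμ, hyR⟩, ⟨ht0, htR⟩⟩ := hqK
  have hcq : F p₀ ≤ F (x, y, t) := hqmax p₀ hp₀K
  have hy0 : 0 < y := lt_of_lt_of_le hμ₀ hyμ
  have hwlq : 0 < wlin μ₀ (x, y, t) := by rw [hwl]; nlinarith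
  have huq : ε * (μ₀ / 2 * t + x + y) < v₁ (x, y, t) - v₂ (x, y, t) := by
    have hgt : F (x, y, t) > 0 := lt_of_lt_of_le hc hcq
    have : F (x, y, t) = v₁ (x, y, t) - v₂ (x, y, t) - ε * (μ₀ / 2 * t + x + y) := by
      simp only [hF]; rw [hwl]
    rw [this] at hgt
    linarith
  -- strict inequalities for coordinates
  have hxR' : x < R := by
    rcases lt_or_eq_of_le hxR with h | h
    · exact h
    · exact absurd (hFsmall (x, y, t) hx0 hyμ ht0 (Or.inl h.ge)) (not_lt.mpr hcq)
  have hyR' : y < R := by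
    rcases lt_or_eq_of_le hyR with h | h
    · exact h
    · exact absurd (hFsmall (x, y, t) hx0 hyμ ht0 (Or.inr (Or.inl h.ge))) (not_lt.mpr hcq)
  have htR' : t < R := by
    rcases lt_or_eq_of_le htR with h | h
    · exact h
    · exact absurd (hFsmall (x, y, t) hx0 hyμ ht0 (Or.inr (Or.inr h.ge))) (not_lt.mpr hcq)
  have hx0' : 0 < x := by
    rcases lt_or_eq_of_le hx0 with h | h
    · exact h
    · exfalso
      have hbv := hbd₂ y hyμ t ht0
      have : F (x, y, t) = -(ε * wlin μ₀ (x, y, t)) := by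
        simp only [hF, ← h, hbv]; ring
      linarith [mul_pos hε hwlq]
  have hyA : y = μ₀ → γ₂ / β₁ < x := by
    intro hyeq
    by_contra hAx
    push_neg at hAx
    have hbv := hbd₁ x ⟨hx0, hAx⟩ t ht0
    rw [← hyeq] at hbv
    have : F (x, y, t) = -(ε * wlin μ₀ (x, y, t)) := by
      simp only [hF, hbv]; ring
    linarith [mul_pos hε hwlq]
  have htA : t = 0 → γ₂ / β₁ < x := by
    intro hteq
    by_contra hAx
    push_neg at hAx
    have hbv := hbd₃ x ⟨hx0, hAx⟩ y hyμ
    rw [← hteq] at hbv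
    have : F (x, y, t) = -(ε * wlin μ₀ (x, y, t)) := by
      simp only [hF, hbv]; ring
    linarith [mul_pos hε hwlq]
  -- derivative of F along lines
  have hd : ∀ dv : ℝ × ℝ × ℝ, HasDerivAt (fun s : ℝ => F ((x, y, t) + s • dv))
      (fderiv ℝ v₁ (x, y, t) dv - fderiv ℝ v₂ (x, y, t) dv
        - ε * (μ₀ / 2 * dv.2.2 + dv.1 + dv.2.1)) 0 := by
    intro dv
    have h1 := hasDerivAt_line v₁ hv₁ (x, y, t) dv
    have h2 := hasDerivAt_line v₂ hv₂ (x, y, t) dv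
    have h3 : HasDerivAt (fun s : ℝ => wlin μ₀ ((x, y, t) + s • dv))
        (μ₀ / 2 * dv.2.2 + dv.1 + dv.2.1) 0 := by
      have heqfun : (fun s : ℝ => wlin μ₀ ((x, y, t) + s • dv))
          = fun s : ℝ => wlin μ₀ (x, y, t) + s * (μ₀ / 2 * dv.2.2 + dv.1 + dv.2.1) := by
        funext s
        simp only [wlin, Prod.fst_add, Prod.snd_add, Prod.smul_fst, Prod.smul_snd,
          smul_eq_mul]
        ring
      rw [heqfun]
      simpa using ((hasDerivAt_id (0:ℝ)).mul_const
        (μ₀ / 2 * dv.2.2 + dv.1 + dv.2.1)).const_add (wlin μ₀ (x, y, t))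
    exact (h1.sub h2).sub (h3.const_mul ε)
  have hF0 : ∀ dv : ℝ × ℝ × ℝ, F ((x, y, t) + (0:ℝ) • dv) = F (x, y, t) := by
    intro dv; norm_num
  -- two-sided max condition
  have hmax2 : ∀ dv : ℝ × ℝ × ℝ, (∀ᶠ s in nhds (0:ℝ), (x, y, t) + s • dv ∈ K) →
      fderiv ℝ v₁ (x, y, t) dv - fderiv ℝ v₂ (x, y, t) dv
        - ε * (μ₀ / 2 * dv.2.2 + dv.1 + dv.2.1) = 0 := by
    intro dv hmem
    refine IsLocalMax.hasDerivAt_eq_zero ?_ (hd dv)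
    filter_upwards [hmem] with s hs
    rw [hF0 dv]
    exact hqmax _ hs
  -- one-sided max condition
  have hmax1 : ∀ dv : ℝ × ℝ × ℝ, ∀ η > (0:ℝ), (∀ s ∈ Set.Ioo (0:ℝ) η, (x, y, t) + s • dv ∈ K) →
      fderiv ℝ v₁ (x, y, t) dv - fderiv ℝ v₂ (x, y, t) dv
        - ε * (μ₀ / 2 * dv.2.2 + dv.1 + dv.2.1) ≤ 0 := by
    intro dv η hη hmem
    refine deriv_nonpos_of_right_max hη (hd dv) ?_
    intro s hs
    rw [hF0 dv]
    exact hqmax _ (hmem s hs)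
  -- x-direction: interior, derivative zero
  have hax : fderiv ℝ v₁ (x, y, t) (1, 0, 0) - fderiv ℝ v₂ (x, y, t) (1, 0, 0) = ε := by
    have h := hmax2 (1, 0, 0) ?_
    · norm_num [-Prod.mk_zero_zero] at h
      linarith
    · have hmem : Set.Ioo (-(min x (R - x))) (min x (R - x)) ∈ nhds (0:ℝ) :=
        Ioo_mem_nhds (by simp [hx0', hxR'] : -(min x (R - x)) < 0)
          (by simp [hx0', hxR'] : (0:ℝ) < min x (R - x))
      filter_upwards [hmem] with s hs
      have h1 : -(x) ≤ -(min x (R - x)) := by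
        simp only [neg_le_neg_iff]; exact min_le_left _ _
      have h2 : min x (R - x) ≤ R - x := min_le_right _ _
      simp only [hK, Set.mem_prod, Set.mem_Icc, Prod.fst_add, Prod.snd_add,
        Prod.smul_fst, Prod.smul_snd, smul_eq_mul]
      norm_num
      refine ⟨⟨by nlinarith [hs.1, hs.2], by nlinarith [hs.1, hs.2]⟩,
        ⟨hyμ, hyR⟩, ht0, htR⟩
  -- t-direction: one-sided (valid whether t = 0 or not)
  have hct : fderiv ℝ v₁ (x, y, t) (0, 0, 1) - fderiv ℝ v₂ (x, y, t) (0, 0, 1)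
      ≤ ε * (μ₀ / 2) := by
    have h := hmax1 (0, 0, 1) (R - t) (by linarith) ?_
    · norm_num [-Prod.mk_zero_zero] at h
      linarith
    · intro s hs
      simp only [hK, Set.mem_prod, Set.mem_Icc, Prod.fst_add, Prod.snd_add,
        Prod.smul_fst, Prod.smul_snd, smul_eq_mul]
      norm_num
      exact ⟨⟨hx0, hxR⟩, ⟨hyμ, hyR⟩, by linarith [hs.1.le], by linarith [hs.2]⟩
  -- y-direction
  have Hy : (γ t - β t * x) * y * (fderiv ℝ v₁ (x, y, t) (0, 1, 0)
        - fderiv ℝ v₂ (x, y, t) (0, 1, 0))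
      ≥ (γ t - β t * x) * y * ε := by
    rcases lt_or_eq_of_le hyμ with hyint | hybd
    · -- interior in y: equality
      have h := hmax2 (0, 1, 0) ?_
      · norm_num [-Prod.mk_zero_zero] at h
        have : fderiv ℝ v₁ (x, y, t) (0, 1, 0) - fderiv ℝ v₂ (x, y, t) (0, 1, 0) = ε := by
          linarith
        rw [ge_iff_le]
        apply le_of_eq
        rw [this]
      · have hmem : Set.Ioo (-(min (y - μ₀) (R - y))) (min (y - μ₀) (R - y)) ∈ nhds (0:ℝ) :=
          Ioo_mem_nhds (by simp; constructor <;> linarith)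
            (by simp; constructor <;> linarith)
        filter_upwards [hmem] with s hs
        have h1 : min (y - μ₀) (R - y) ≤ y - μ₀ := min_le_left _ _
        have h2 : min (y - μ₀) (R - y) ≤ R - y := min_le_right _ _
        simp only [hK, Set.mem_prod, Set.mem_Icc, Prod.fst_add, Prod.snd_add,
          Prod.smul_fst, Prod.smul_snd, smul_eq_mul]
        norm_num
        exact ⟨⟨hx0, hxR⟩, ⟨by linarith [hs.1, hs.2], by linarith [hs.1, hs.2]⟩, ht0, htR⟩
    · -- y = μ₀ : one-sided, and coefficient is nonpositive
      have hxA : γ₂ / β₁ < x := hyA hybd.symm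
      have hβt := hβ t ht0
      have hγt := hγ t ht0
      have hcoef : γ t - β t * x ≤ 0 := by
        have h1 : γ₂ < β₁ * x := by
          rw [div_lt_iff₀ hβ₁] at hxA
          linarith
        have h2 : β₁ * x ≤ β t * x := mul_le_mul_of_nonneg_right hβt.1 hx0'.le
        linarith [hγt.2]
      have h := hmax1 (0, 1, 0) (R - y) (by linarith) ?_
      · norm_num [-Prod.mk_zero_zero] at h
        have hble : fderiv ℝ v₁ (x, y, t) (0, 1, 0) - fderiv ℝ v₂ (x, y, t) (0, 1, 0) ≤ ε := by
          linarith
        have hcy : (γ t - β t * x) * y ≤ 0 :=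
          mul_nonpos_of_nonpos_of_nonneg hcoef hy0.le
        exact mul_le_mul_of_nonpos_left hble hcy
      · intro s hs
        simp only [hK, Set.mem_prod, Set.mem_Icc, Prod.fst_add, Prod.snd_add,
          Prod.smul_fst, Prod.smul_snd, smul_eq_mul]
        norm_num
        exact ⟨⟨hx0, hxR⟩, ⟨by linarith [hs.1.le], by linarith [hs.2]⟩, ht0, htR⟩
  -- the two equations at q
  have hqS' : ((x, y, t) : ℝ × ℝ × ℝ) ∈ Set.Ici (0:ℝ) ×ˢ Set.Ici μ₀ ×ˢ Set.Ici (0:ℝ) := by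
    simp only [Set.mem_prod, Set.mem_Ici]
    exact ⟨hx0, hyμ, ht0⟩
  have hE1 := hE₁ (x, y, t) hqS'
  have hE2 := hE₂ (x, y, t) hqS'
  simp only [sirOp] at hE1 hE2
  -- abbreviations
  have hβt := hβ t ht0
  have hγt := hγ t ht0
  have hβt0 : 0 < β t := lt_of_lt_of_le hβ₁ hβt.1
  set a1 := fderiv ℝ v₁ (x, y, t) (1, 0, 0) with ha1d
  set a2 := fderiv ℝ v₂ (x, y, t) (1, 0, 0) with ha2d
  set b1 := fderiv ℝ v₁ (x, y, t) (0, 1, 0) with hb1d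
  set b2 := fderiv ℝ v₂ (x, y, t) (0, 1, 0) with hb2d
  set c1 := fderiv ℝ v₁ (x, y, t) (0, 0, 1) with hc1d
  set c2 := fderiv ℝ v₂ (x, y, t) (0, 0, 1) with hc2d
  have ha1 : a1 = a2 + ε := by linarith [hax]
  rw [ha1] at hE1
  have hm : x * max (-(a2 + ε)) 0 ≤ x * max (-a2) 0 :=
    mul_le_mul_of_nonneg_left (max_le_max (by linarith) le_rfl) hx0'.le
  have hP : 0 ≤ β t * x * y * ε :=
    (mul_pos (mul_pos (mul_pos hβt0 hx0') hy0) hε).le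
  have hγty : γ₁ * μ₀ ≤ γ t * y :=
    mul_le_mul hγt.1 hyμ hμ₀.le (le_trans hγ₁.le hγt.1)
  have hγtyε : γ₁ * μ₀ * ε ≤ γ t * y * ε := mul_le_mul_of_nonneg_right hγty hε.le
  have hεμt : 0 ≤ ε * (μ₀ / 2) * t := by positivity
  have hεx : 0 ≤ ε * x := by positivity
  have hεy : ε * μ₀ ≤ ε * y := mul_le_mul_of_nonneg_left hyμ hε.le
  have hεμ : 0 < ε * μ₀ := mul_pos hε hμ₀
  have hγμε : 0 < γ₁ * μ₀ * ε := by positivity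
  linarith [hE1, hE2, hct, huq, hm, Hy, hP, hγtyε, hεμt, hεx, hεy, hεμ, hγμε]

/-- Comparison/uniqueness for bounded C¹ solutions of the transformed
equation with prescribed values on the effective boundary. Points are `(x, y, t)`. -/
theorem sir_smooth_comparison
    (β γ : ℝ → ℝ) (β₁ β₂ γ₁ γ₂ μ₀ : ℝ)
    (hβ₁ : 0 < β₁) (hβ₁₂ : β₁ ≤ β₂) (hγ₁ : 0 < γ₁) (hγ₁₂ : γ₁ ≤ γ₂)
    (hβc : Continuous β) (hγc : Continuous γ)
    (hβ : ∀ t ≥ (0:ℝ), β t ∈ Set.Icc β₁ β₂)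
    (hγ : ∀ t ≥ (0:ℝ), γ t ∈ Set.Icc γ₁ γ₂) (hμ₀ : 0 < μ₀)
    (v₁ v₂ : ℝ × ℝ × ℝ → ℝ)
    (hv₁ : ContDiff ℝ 1 v₁) (hv₂ : ContDiff ℝ 1 v₂)
    (hv₁b : ∃ M : ℝ, ∀ p, |v₁ p| ≤ M) (hv₂b : ∃ M : ℝ, ∀ p, |v₂ p| ≤ M)
    (heq : ∀ v ∈ ({v₁, v₂} : Set (ℝ × ℝ × ℝ → ℝ)),
      ∀ p ∈ Set.Ioi (0:ℝ) ×ˢ Set.Ioi μ₀ ×ˢ Set.Ioi (0:ℝ),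
        -(fderiv ℝ v p (0, 0, 1)) + v p +
            β p.2.2 * p.1 * p.2.1 * fderiv ℝ v p (1, 0, 0) -
            p.1 * max (-(fderiv ℝ v p (1, 0, 0))) 0 +
            (γ p.2.2 - β p.2.2 * p.1) * p.2.1 * fderiv ℝ v p (0, 1, 0) = 0)
    -- boundary conditions on the effective boundary
    (hbd₁ : ∀ x ∈ Set.Icc (0:ℝ) (γ₂ / β₁), ∀ t ≥ (0:ℝ), v₁ (x, μ₀, t) = v₂ (x, μ₀, t))
    (hbd₂ : ∀ y ≥ μ₀, ∀ t ≥ (0:ℝ), v₁ (0, y, t) = v₂ (0, y, t))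
    (hbd₃ : ∀ x ∈ Set.Icc (0:ℝ) (γ₂ / β₁), ∀ y ≥ μ₀, v₁ (x, y, 0) = v₂ (x, y, 0)) :
    ∀ p ∈ closure (Set.Ioi (0:ℝ) ×ˢ Set.Ioi μ₀ ×ˢ Set.Ioi (0:ℝ)), v₁ p = v₂ p := by
  intro p hp
  have hcl : closure (Set.Ioi (0:ℝ) ×ˢ Set.Ioi μ₀ ×ˢ Set.Ioi (0:ℝ))
      = Set.Ici (0:ℝ) ×ˢ Set.Ici μ₀ ×ˢ Set.Ici (0:ℝ) := by
    simp [closure_prod_eq, closure_Ioi]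
  rw [hcl] at hp
  have hE₁ := sirOp_closure β γ hβc hγc μ₀ v₁ hv₁
    (fun q hq => heq v₁ (Set.mem_insert _ _) q hq)
  have hE₂ := sirOp_closure β γ hβc hγc μ₀ v₂ hv₂
    (fun q hq => heq v₂ (Set.mem_insert_of_mem _ rfl) q hq)
  have h₁ := sir_comp_le β γ β₁ β₂ γ₁ γ₂ μ₀ hβ₁ hγ₁ hβ hγ hμ₀ v₁ v₂ hv₁ hv₂ hv₁b hv₂b
    hE₁ hE₂ hbd₁ hbd₂ hbd₃ p hp
  have h₂ := sir_comp_le β γ β₁ β₂ γ₁ γ₂ μ₀ hβ₁ hγ₁ hβ hγ hμ₀ v₂ v₁ hv₂ hv₁ hv₂b hv₁b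
    hE₂ hE₁ (fun x hx t ht => (hbd₁ x hx t ht).symm)
    (fun y hy t ht => (hbd₂ y hy t ht).symm)
    (fun x hx y hy => (hbd₃ x hx y hy).symm) p hp
  linarith
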